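/- Let p ≥ q ≥ t be positive integers with t = gcd(p,q), and define C := 1 − (t/(p+q))·((p² + (p−t)(q−t))/p²). Then 1/2 ≤ C ≤ 1 − t/(p+q). Moreover, if q does not divide p then C > 1/2, and if q divides p then C = p/(p+q). -/

import Mathlib

/-- For `p ≥ q ≥ t` with `t = gcd(p,q)`, the constant
`C = 1 - (t/(p+q))·((p² + (p-t)(q-t))/p²)` satisfies `1/2 ≤ C ≤ 1 - t/(p+q)`;
moreover `C > 1/2` if `q ∤ p`, and `C = p/(p+q)` if `q ∣ p`. -/
theorem stmt10 (p q t : ℕ) (hqp : q ≤ p) (htq : t ≤ q) (htpos : 0 < t)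
    (ht : t = Nat.gcd p q) :
    ∀ C : ℚ, C = 1 - ((t : ℚ) / ((p : ℚ) + q)) *
        (((p : ℚ) ^ 2 + ((p : ℚ) - t) * ((q : ℚ) - t)) / (p : ℚ) ^ 2) →
      (1 / 2 : ℚ) ≤ C ∧ C ≤ 1 - (t : ℚ) / ((p : ℚ) + q) ∧
        (¬ q ∣ p → (1 / 2 : ℚ) < C) ∧ (q ∣ p → C = (p : ℚ) / ((p : ℚ) + q)) := by
  intro C hC
  have hp0 : 0 < p := lt_of_lt_of_le htpos (htq.trans hqp)
  have hq0 : 0 < q := lt_of_lt_of_le htpos htq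
  have hpQ : (0:ℚ) < p := by exact_mod_cast hp0
  have hqQ : (0:ℚ) < q := by exact_mod_cast hq0
  have htQ : (0:ℚ) < t := by exact_mod_cast htpos
  have hqpQ : (q:ℚ) ≤ p := by exact_mod_cast hqp
  have htqQ : (t:ℚ) ≤ q := by exact_mod_cast htq
  have hsum : (0:ℚ) < (p:ℚ) + q := by linarith
  have htdq : t ∣ q := ht ▸ Nat.gcd_dvd_right p q
  have htdp : t ∣ p := ht ▸ Nat.gcd_dvd_left p q
  have key1 : q ∣ p → C = (p : ℚ) / ((p : ℚ) + q) := by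
    intro hdvd
    have ht' : t = q := by rw [ht, Nat.gcd_eq_right hdvd]
    subst ht'
    rw [hC]
    field_simp
    ring
  have key2 : ¬ q ∣ p → (1 / 2 : ℚ) < C := by
    intro hnd
    have htne : t ≠ q := fun h => hnd (h ▸ htdp)
    have hqlt : q < p := lt_of_le_of_ne hqp (fun h => hnd (h ▸ dvd_refl q))
    have h2t : 2 * t ≤ q := by
      obtain ⟨k, hk⟩ := htdq
      rcases k with _ | _ | k
      · omega
      · omega
      · nlinarith
    have h2tQ : 2 * (t:ℚ) ≤ q := by exact_mod_cast h2t
    have hqltQ : (q:ℚ) < p := by exact_mod_cast hqlt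
    rw [hC]
    rw [show (1:ℚ) - ((t : ℚ) / ((p : ℚ) + q)) *
        (((p : ℚ) ^ 2 + ((p : ℚ) - t) * ((q : ℚ) - t)) / (p : ℚ) ^ 2)
      = ((p:ℚ)^2 * (p + q) - t * ((p:ℚ)^2 + (p - t)*(q - t))) / ((p + q) * p^2) by
        field_simp]
    rw [lt_div_iff₀ (by positivity)]
    nlinarith [mul_nonneg (mul_nonneg (sub_nonneg.2 h2tQ) (by linarith : (0:ℚ) ≤ (p:ℚ) - t)) (by linarith : (0:ℚ) ≤ (q:ℚ) - t),
      mul_pos (mul_pos hqQ hpQ) (by linarith : (0:ℚ) < (q:ℚ) - t),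
      mul_pos (mul_pos hpQ hpQ) (sub_pos.2 hqltQ),
      mul_nonneg (sub_nonneg.2 h2tQ) (sq_nonneg (p:ℚ))]
  refine ⟨?_, ?_, key2, key1⟩
  · by_cases h : q ∣ p
    · rw [key1 h, le_div_iff₀ hsum]; linarith
    · linarith [key2 h]
  · have hA : (0:ℚ) ≤ (t:ℚ)/((p:ℚ)+q) := by positivity
    have hX : (1:ℚ) ≤ ((p:ℚ)^2 + ((p:ℚ) - t)*((q:ℚ) - t))/(p:ℚ)^2 := by
      rw [le_div_iff₀ (by positivity)]
      nlinarith [mul_nonneg (by linarith : (0:ℚ) ≤ (p:ℚ) - t) (by linarith : (0:ℚ) ≤ (q:ℚ) - t)]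
    have := mul_le_mul_of_nonneg_left hX hA
    rw [hC]; linarith
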